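/- Let r ≥ 1, b ≥ 2, n ≥ 2^{r+1}, q = 2^b, and let −1 ≤ i ≤ r−2. Let R = C ⊆ F_q^n be the span of the first 2^{r+1} − 2^{r−i} standard basis vectors. Let G be the simple graph whose vertex set is V = {M ∈ F_q^{n×n} : rank(M) = 2^{r−i−1}, rowspan(M) ∩ R = {0}, colspan(M) ∩ C = {0}}, with M adjacent to M' if and only if M ≠ M' and there exist L₁, L₂, L₃ ∈ F_q^{n×n}, each of rank 2^{r−i−2}, such that M = L₁ + L₂, M' = L₁ + L₃, rank(L₁ + L₂ + L₃) = 3·2^{r−i−2}, rowspan(L₁ + L₂ + L₃) ∩ R = {0}, and colspan(L₁ + L₂ + L₃) ∩ C = {0}. Then G is connected and non-bipartite. -/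

import Mathlib

/-- The row space of a square matrix: the span of its rows. -/
def rowSpace {F : Type*} [Field F] {n : ℕ} (M : Matrix (Fin n) (Fin n) F) :
    Submodule F (Fin n → F) :=
  Submodule.span F (Set.range fun a => M a)

/-- The column space of a square matrix: the span of its columns. -/
def colSpace {F : Type*} [Field F] {n : ℕ} (M : Matrix (Fin n) (Fin n) F) :
    Submodule F (Fin n → F) :=
  Submodule.span F (Set.range fun a => fun b => M b a)

/-- The span of the first `d` standard basis vectors of `F^n`. -/
def stdSpan (F : Type*) [Field F] (n d : ℕ) : Submodule F (Fin n → F) :=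
  Submodule.span F {v | ∃ a : Fin n, (a : ℕ) < d ∧ v = Pi.single a 1}

open Module Submodule Matrix

variable {F : Type*} [Field F] {n : ℕ}

lemma colSpace_transpose (M : Matrix (Fin n) (Fin n) F) : colSpace Mᵀ = rowSpace M := rfl

lemma rowSpace_transpose (M : Matrix (Fin n) (Fin n) F) : rowSpace Mᵀ = colSpace M := rfl

lemma colSpace_eq_range (M : Matrix (Fin n) (Fin n) F) :
    colSpace M = LinearMap.range M.mulVecLin := by
  rw [Matrix.range_mulVecLin]; rfl

lemma finrank_colSpace_eq_rank (M : Matrix (Fin n) (Fin n) F) :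
    finrank F (colSpace M) = M.rank := by
  rw [colSpace_eq_range]; rfl

lemma finrank_rowSpace_eq_rank (M : Matrix (Fin n) (Fin n) F) :
    finrank F (rowSpace M) = M.rank := by
  rw [← colSpace_transpose, finrank_colSpace_eq_rank, Matrix.rank_transpose]

lemma rowSpace_eq_span_range (M : Matrix (Fin n) (Fin n) F) :
    rowSpace M = Submodule.span F (Set.range M) := rfl

lemma rowSpace_add_le (A B : Matrix (Fin n) (Fin n) F) :
    rowSpace (A + B) ≤ rowSpace A ⊔ rowSpace B := by
  rw [rowSpace]
  refine Submodule.span_le.2 ?_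
  rintro x ⟨a, rfl⟩
  show A a + B a ∈ _
  exact Submodule.add_mem_sup (Submodule.subset_span ⟨a, rfl⟩) (Submodule.subset_span ⟨a, rfl⟩)

lemma colSpace_add_le (A B : Matrix (Fin n) (Fin n) F) :
    colSpace (A + B) ≤ colSpace A ⊔ colSpace B := by
  rw [← rowSpace_transpose, ← rowSpace_transpose A, ← rowSpace_transpose B, Matrix.transpose_add]
  exact rowSpace_add_le _ _

lemma ker_fromRows (A B : Matrix (Fin n) (Fin n) F) :
    LinearMap.ker (Matrix.fromRows A B).mulVecLin
      = LinearMap.ker A.mulVecLin ⊓ LinearMap.ker B.mulVecLin := by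
  ext x
  simp only [LinearMap.mem_ker, Submodule.mem_inf, Matrix.mulVecLin_apply,
    Matrix.fromRows_mulVec]
  constructor
  · intro h
    constructor <;> funext i
    · exact congrFun h (Sum.inl i)
    · exact congrFun h (Sum.inr i)
  · rintro ⟨h1, h2⟩
    funext i
    cases i with
    | inl a => exact congrFun h1 a
    | inr a => exact congrFun h2 a

lemma rank_fromRows (A B : Matrix (Fin n) (Fin n) F) :
    (Matrix.fromRows A B).rank = finrank F ((rowSpace A ⊔ rowSpace B : Submodule F (Fin n → F))) := by
  have h : Set.range (Matrix.fromRows A B).row = Set.range A ∪ Set.range B := Set.Sum.elim_range A B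
  rw [Matrix.rank_eq_finrank_span_row, h, Submodule.span_union]
  rfl

/-- Rank additivity for matrices with independent row spaces and column spaces. -/
lemma rank_add_of_disjoint {A B : Matrix (Fin n) (Fin n) F}
    (hrow : rowSpace A ⊓ rowSpace B = ⊥) (hcol : colSpace A ⊓ colSpace B = ⊥) :
    (A + B).rank = A.rank + B.rank ∧
      rowSpace (A + B) = rowSpace A ⊔ rowSpace B ∧
      colSpace (A + B) = colSpace A ⊔ colSpace B := by
  have hker : LinearMap.ker (A + B).mulVecLin
      = LinearMap.ker A.mulVecLin ⊓ LinearMap.ker B.mulVecLin := by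
    ext x
    simp only [LinearMap.mem_ker, Submodule.mem_inf, Matrix.mulVecLin_apply, Matrix.add_mulVec]
    constructor
    · intro h
      have hA : A.mulVec x ∈ colSpace A ⊓ colSpace B := by
        constructor
        · rw [colSpace_eq_range]; exact ⟨x, rfl⟩
        · rw [colSpace_eq_range]
          refine ⟨-x, ?_⟩
          rw [map_neg, neg_eq_iff_add_eq_zero, add_comm]
          simpa using h
      rw [hcol, Submodule.mem_bot] at hA
      refine ⟨hA, ?_⟩
      rw [hA, zero_add] at h
      exact h
    · rintro ⟨h1, h2⟩
      rw [h1, h2, add_zero]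
  -- rank-nullity
  have rn1 := LinearMap.finrank_range_add_finrank_ker (A + B).mulVecLin
  have rn2 := LinearMap.finrank_range_add_finrank_ker (Matrix.fromRows A B).mulVecLin
  rw [hker, ← ker_fromRows] at rn1
  have hrk : (A + B).rank = (Matrix.fromRows A B).rank := by
    have : finrank F (LinearMap.range (A + B).mulVecLin)
        = finrank F (LinearMap.range (Matrix.fromRows A B).mulVecLin) := by omega
    exact this
  have hsumrow : finrank F ((rowSpace A ⊔ rowSpace B : Submodule F (Fin n → F)))
      = A.rank + B.rank := by
    have := Submodule.finrank_sup_add_finrank_inf_eq (rowSpace A) (rowSpace B)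
    rw [hrow] at this
    simp only [finrank_bot, add_zero] at this
    rw [this, finrank_rowSpace_eq_rank, finrank_rowSpace_eq_rank]
  have hrank : (A + B).rank = A.rank + B.rank := by
    rw [hrk, rank_fromRows, hsumrow]
  refine ⟨hrank, ?_, ?_⟩
  · refine Submodule.eq_of_le_of_finrank_le (rowSpace_add_le A B) ?_
    rw [hsumrow, finrank_rowSpace_eq_rank, hrank]
  · refine Submodule.eq_of_le_of_finrank_le (colSpace_add_le A B) ?_
    have hsumcol : finrank F ((colSpace A ⊔ colSpace B : Submodule F (Fin n → F)))
        = A.rank + B.rank := by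
      have := Submodule.finrank_sup_add_finrank_inf_eq (colSpace A) (colSpace B)
      rw [hcol] at this
      simp only [finrank_bot, add_zero] at this
      rw [this, finrank_colSpace_eq_rank, finrank_colSpace_eq_rank]
    rw [hsumcol, finrank_colSpace_eq_rank, hrank]

section Helpers

variable {V : Type*} [AddCommGroup V] [Module F V]

lemma inf_bot_of_le {P P' R : Submodule F V} (h : P ≤ P') (h' : P' ⊓ R = ⊥) : P ⊓ R = ⊥ :=
  le_bot_iff.1 (h' ▸ inf_le_inf_right R h)

lemma sup_inf_bot {P Q R : Submodule F V} (h1 : P ⊓ R = ⊥) (h2 : Q ⊓ (P ⊔ R) = ⊥) :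
    (P ⊔ Q) ⊓ R = ⊥ := by
  rw [eq_bot_iff]
  rintro x ⟨hx1, hx2⟩
  obtain ⟨p, hp, q, hq, rfl⟩ := Submodule.mem_sup.1 hx1
  have hq' : q ∈ Q ⊓ (P ⊔ R) := by
    refine ⟨hq, ?_⟩
    have : q = (p + q) - p := by abel
    rw [this]
    exact Submodule.sub_mem _ (Submodule.mem_sup_right hx2) (Submodule.mem_sup_left hp)
  rw [h2, Submodule.mem_bot] at hq'
  subst hq'
  rw [add_zero] at hx2 ⊢
  have : p ∈ P ⊓ R := ⟨hp, hx2⟩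
  rw [h1, Submodule.mem_bot] at this
  simp [this]

lemma disj_helper {P Q₁ Q₂ : Submodule F V} (h1 : Q₁ ⊓ Q₂ = ⊥) (h2 : (Q₁ ⊔ Q₂) ⊓ P = ⊥) :
    Q₂ ⊓ (P ⊔ Q₁) = ⊥ := by
  rw [eq_bot_iff]
  rintro x ⟨hx1, hx2⟩
  obtain ⟨p, hp, q, hq, rfl⟩ := Submodule.mem_sup.1 hx2
  have hpm : p ∈ (Q₁ ⊔ Q₂) ⊓ P := by
    refine ⟨?_, hp⟩
    have : p = (p + q) - q := by abel
    rw [this]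
    exact Submodule.sub_mem _ (Submodule.mem_sup_right hx1) (Submodule.mem_sup_left hq)
  rw [h2, Submodule.mem_bot] at hpm
  subst hpm
  rw [zero_add] at hx1 ⊢
  have : q ∈ Q₁ ⊓ Q₂ := ⟨hq, hx1⟩
  rw [h1, Submodule.mem_bot] at this
  simp [this]

lemma exists_not_mem_two {p q : Submodule F V} (hp : p ≠ ⊤) (hq : q ≠ ⊤) :
    ∃ v, v ∉ p ∧ v ∉ q := by
  have hx : ∃ x, x ∉ p := by
    by_contra h
    push_neg at h
    exact hp (Submodule.eq_top_iff'.2 h)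
  have hy : ∃ y, y ∉ q := by
    by_contra h
    push_neg at h
    exact hq (Submodule.eq_top_iff'.2 h)
  obtain ⟨x, hx⟩ := hx
  obtain ⟨y, hy⟩ := hy
  by_cases hxq : x ∈ q
  · by_cases hyp : y ∈ p
    · refine ⟨x + y, fun h => hx ?_, fun h => hy ?_⟩
      · have := Submodule.sub_mem _ h hyp; simpa using this
      · have := Submodule.sub_mem _ h hxq; simpa using this
    · exact ⟨y, hyp, hy⟩
  · exact ⟨x, hx, hxq⟩

end Helpers

lemma exists_subspace_avoid (W₁ W₂ : Submodule F (Fin n → F)) (k : ℕ)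
    (h₁ : finrank F W₁ + k ≤ n) (h₂ : finrank F W₂ + k ≤ n) :
    ∃ U : Submodule F (Fin n → F), finrank F U = k ∧ U ⊓ W₁ = ⊥ ∧ U ⊓ W₂ = ⊥ := by
  induction k with
  | zero => exact ⟨⊥, finrank_bot F _, bot_inf_eq _, bot_inf_eq _⟩
  | succ k ih =>
    obtain ⟨U, hU, hUW₁, hUW₂⟩ := ih (by omega) (by omega)
    have hfin : finrank F (Fin n → F) = n := Module.finrank_fin_fun F
    have hsup : ∀ (W : Submodule F (Fin n → F)), finrank F W + (k + 1) ≤ n → W ⊔ U ≠ ⊤ := by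
      intro W hW
      have := Submodule.finrank_sup_add_finrank_inf_eq W U
      have hlt : finrank F ((W ⊔ U : Submodule F (Fin n → F))) < finrank F (Fin n → F) := by
        rw [hfin]; omega
      exact (lt_top_of_finrank_lt_finrank hlt).ne
    obtain ⟨v, hv₁, hv₂⟩ := exists_not_mem_two (hsup W₁ h₁) (hsup W₂ h₂)
    have hvU : v ∉ U := fun h => hv₁ (Submodule.mem_sup_right h)
    have hv0 : v ≠ 0 := fun h => hvU (h ▸ Submodule.zero_mem U)
    refine ⟨U ⊔ Submodule.span F {v}, ?_, ?_, ?_⟩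
    · have hinf : U ⊓ Submodule.span F {v} = ⊥ := by
        rw [eq_bot_iff]
        rintro x ⟨hx1, hx2⟩
        obtain ⟨c, rfl⟩ := Submodule.mem_span_singleton.1 hx2
        rcases eq_or_ne c 0 with rfl | hc
        · simp
        · have := U.smul_mem c⁻¹ hx1
          rw [smul_smul, inv_mul_cancel₀ hc, one_smul] at this
          exact absurd this hvU
      have := Submodule.finrank_sup_add_finrank_inf_eq U (Submodule.span F {v})
      rw [hinf, finrank_bot, finrank_span_singleton hv0] at this
      omega
    all_goals {
      rw [eq_bot_iff]
      rintro x ⟨hx1, hx2⟩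
      obtain ⟨u, hu, s, hs, rfl⟩ := Submodule.mem_sup.1 hx1
      obtain ⟨c, rfl⟩ := Submodule.mem_span_singleton.1 hs
      rcases eq_or_ne c 0 with rfl | hc
      · rw [zero_smul, add_zero] at hx2 ⊢
        first
        | { have : u ∈ U ⊓ W₁ := ⟨hu, hx2⟩
            rwa [hUW₁] at this }
        | { have : u ∈ U ⊓ W₂ := ⟨hu, hx2⟩
            rwa [hUW₂] at this }
      · exfalso
        have hv : v = c⁻¹ • ((u + c • v) - u) := by
          rw [add_sub_cancel_left, smul_smul, inv_mul_cancel₀ hc, one_smul]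
        first
        | exact hv₁ (hv ▸ Submodule.smul_mem _ _ (Submodule.sub_mem _
            (Submodule.mem_sup_left hx2) (Submodule.mem_sup_right hu)))
        | exact hv₂ (hv ▸ Submodule.smul_mem _ _ (Submodule.sub_mem _
            (Submodule.mem_sup_left hx2) (Submodule.mem_sup_right hu)))
    }

lemma exists_li_avoid (W₁ W₂ : Submodule F (Fin n → F)) (k : ℕ)
    (h₁ : finrank F W₁ + k ≤ n) (h₂ : finrank F W₂ + k ≤ n) :
    ∃ u : Fin k → (Fin n → F), LinearIndependent F u ∧
      Submodule.span F (Set.range u) ⊓ W₁ = ⊥ ∧ Submodule.span F (Set.range u) ⊓ W₂ = ⊥ := by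
  obtain ⟨U, hU, hUW₁, hUW₂⟩ := exists_subspace_avoid W₁ W₂ k h₁ h₂
  have : FiniteDimensional F U := inferInstance
  let b := Module.finBasis F U
  let e : Fin k ≃ Fin (finrank F U) := finCongr hU.symm
  refine ⟨fun i => (b (e i) : Fin n → F), ?_, ?_, ?_⟩
  · have hli : LinearIndependent F fun i => (b i : Fin n → F) :=
      b.linearIndependent.map' U.subtype (Submodule.ker_subtype U)
    exact hli.comp e e.injective
  all_goals {
    have hspan : Submodule.span F (Set.range fun i => (b (e i) : Fin n → F)) = U := by
      have h1 : (Set.range fun i => (b (e i) : Fin n → F))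
          = U.subtype '' (Set.range b) := by
        rw [← Set.range_comp]
        ext x
        constructor
        · rintro ⟨i, rfl⟩; exact ⟨e i, rfl⟩
        · rintro ⟨i, rfl⟩; exact ⟨e.symm i, by simp⟩
      rw [h1, ← Submodule.map_span, b.span_eq, Submodule.map_subtype_top]
    rw [hspan]
    assumption
  }

lemma rowSpace_vecMulVec_le (u v : Fin n → F) :
    rowSpace (Matrix.vecMulVec u v) ≤ Submodule.span F {v} := by
  refine Submodule.span_le.2 ?_
  rintro x ⟨a, rfl⟩
  show Matrix.vecMulVec u v a ∈ _
  have : Matrix.vecMulVec u v a = u a • v := by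
    funext b; simp [Matrix.vecMulVec_apply, smul_eq_mul]
  rw [this]
  exact Submodule.smul_mem _ _ (Submodule.mem_span_singleton_self v)

lemma colSpace_vecMulVec_le (u v : Fin n → F) :
    colSpace (Matrix.vecMulVec u v) ≤ Submodule.span F {u} := by
  refine Submodule.span_le.2 ?_
  rintro x ⟨a, rfl⟩
  show (fun b => Matrix.vecMulVec u v b a) ∈ _
  have : (fun b => Matrix.vecMulVec u v b a) = v a • u := by
    funext b; simp [Matrix.vecMulVec_apply, smul_eq_mul, mul_comm]
  rw [this]
  exact Submodule.smul_mem _ _ (Submodule.mem_span_singleton_self u)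

lemma rowSpace_vecMulVec (u v : Fin n → F) (hu : u ≠ 0) :
    rowSpace (Matrix.vecMulVec u v) = Submodule.span F {v} := by
  refine le_antisymm (rowSpace_vecMulVec_le u v) ?_
  rw [Submodule.span_singleton_le_iff_mem]
  obtain ⟨a, ha⟩ := Function.ne_iff.1 hu
  have ha' : u a ≠ 0 := by simpa using ha
  have heq : v = (u a)⁻¹ • Matrix.vecMulVec u v a := by
    funext b; simp [Matrix.vecMulVec_apply, smul_eq_mul, ← mul_assoc,
      inv_mul_cancel₀ ha']
  have hm : (u a)⁻¹ • Matrix.vecMulVec u v a ∈ rowSpace (Matrix.vecMulVec u v) :=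
    Submodule.smul_mem _ _ (Submodule.subset_span ⟨a, rfl⟩)
  rw [← heq] at hm
  exact hm

lemma colSpace_vecMulVec (u v : Fin n → F) (hv : v ≠ 0) :
    colSpace (Matrix.vecMulVec u v) = Submodule.span F {u} := by
  refine le_antisymm (colSpace_vecMulVec_le u v) ?_
  rw [Submodule.span_singleton_le_iff_mem]
  obtain ⟨a, ha⟩ := Function.ne_iff.1 hv
  have ha' : v a ≠ 0 := by simpa using ha
  have heq : u = (v a)⁻¹ • fun b => Matrix.vecMulVec u v b a := by
    funext b
    simp only [Pi.smul_apply, Matrix.vecMulVec_apply, smul_eq_mul]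
    rw [← mul_assoc, mul_comm ((v a)⁻¹), mul_assoc, inv_mul_cancel₀ ha', mul_one]
  have hm : (v a)⁻¹ • (fun b => Matrix.vecMulVec u v b a) ∈ colSpace (Matrix.vecMulVec u v) :=
    Submodule.smul_mem _ _ (Submodule.subset_span ⟨a, rfl⟩)
  rw [← heq] at hm
  exact hm

lemma rowSpace_zero : rowSpace (0 : Matrix (Fin n) (Fin n) F) = ⊥ := by
  rw [eq_bot_iff]
  refine Submodule.span_le.2 ?_
  rintro x ⟨a, rfl⟩
  show (0 : Matrix (Fin n) (Fin n) F) a ∈ _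
  simp [Matrix.zero_apply]
  rfl

lemma colSpace_zero : colSpace (0 : Matrix (Fin n) (Fin n) F) = ⊥ := by
  rw [eq_bot_iff]
  refine Submodule.span_le.2 ?_
  rintro x ⟨a, rfl⟩
  show (fun b => (0 : Matrix (Fin n) (Fin n) F) b a) ∈ _
  simp only [Matrix.zero_apply]
  exact Submodule.zero_mem ⊥

lemma rank_vecMulVec_one {u v : Fin n → F} (hu : u ≠ 0) (hv : v ≠ 0) :
    (Matrix.vecMulVec u v).rank = 1 := by
  rw [← finrank_colSpace_eq_rank, colSpace_vecMulVec u v hv, finrank_span_singleton hu]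

lemma outer_props {ι : Type*} [DecidableEq ι] {u v : ι → (Fin n → F)}
    (hu : LinearIndependent F u) (hv : LinearIndependent F v) (S : Finset ι) :
    rowSpace (∑ i ∈ S, Matrix.vecMulVec (u i) (v i)) = Submodule.span F (v '' ↑S) ∧
    colSpace (∑ i ∈ S, Matrix.vecMulVec (u i) (v i)) = Submodule.span F (u '' ↑S) ∧
    (∑ i ∈ S, Matrix.vecMulVec (u i) (v i)).rank = S.card := by
  induction S using Finset.induction_on with
  | empty => simp [rowSpace_zero, colSpace_zero]
  | insert _ _ ha =>
    rename_i a S ih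
    obtain ⟨ihrow, ihcol, ihrank⟩ := ih
    rw [Finset.sum_insert ha]
    have hrowd : rowSpace (Matrix.vecMulVec (u a) (v a))
        ⊓ rowSpace (∑ i ∈ S, Matrix.vecMulVec (u i) (v i)) = ⊥ := by
      rw [rowSpace_vecMulVec _ _ (hu.ne_zero a), ihrow, ← Set.image_singleton]
      exact disjoint_iff.1 (hv.disjoint_span_image (by simpa using ha))
    have hcold : colSpace (Matrix.vecMulVec (u a) (v a))
        ⊓ colSpace (∑ i ∈ S, Matrix.vecMulVec (u i) (v i)) = ⊥ := by
      rw [colSpace_vecMulVec _ _ (hv.ne_zero a), ihcol, ← Set.image_singleton]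
      exact disjoint_iff.1 (hu.disjoint_span_image (by simpa using ha))
    obtain ⟨hrank, hrow, hcol⟩ := rank_add_of_disjoint hrowd hcold
    refine ⟨?_, ?_, ?_⟩
    · rw [hrow, rowSpace_vecMulVec _ _ (hu.ne_zero a), ihrow, ← Submodule.span_union,
        Finset.coe_insert, Set.image_insert_eq, Set.insert_eq]
    · rw [hcol, colSpace_vecMulVec _ _ (hv.ne_zero a), ihcol, ← Submodule.span_union,
        Finset.coe_insert, Set.image_insert_eq, Set.insert_eq]
    · rw [hrank, rank_vecMulVec_one (hu.ne_zero a) (hv.ne_zero a), ihrank,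
        Finset.card_insert_of_notMem ha, add_comm]

lemma exists_split (M : Matrix (Fin n) (Fin n) F) (s t : ℕ) (h : M.rank = s + t) :
    ∃ A B : Matrix (Fin n) (Fin n) F, M = A + B ∧ A.rank = s ∧ B.rank = t ∧
      rowSpace A ⊓ rowSpace B = ⊥ ∧ colSpace A ⊓ colSpace B = ⊥ ∧
      rowSpace A ⊔ rowSpace B = rowSpace M ∧ colSpace A ⊔ colSpace B = colSpace M := by
  set m := s + t with hm
  have hfc : finrank F (colSpace M) = m := by rw [finrank_colSpace_eq_rank, h]
  let b := Module.finBasis F (colSpace M)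
  let e : Fin m ≃ Fin (finrank F (colSpace M)) := finCongr hfc.symm
  set u : Fin m → (Fin n → F) := fun i => (b (e i) : Fin n → F) with hu_def
  have hu : LinearIndependent F u :=
    (b.linearIndependent.map' (colSpace M).subtype (Submodule.ker_subtype _)).comp e e.injective
  have hspanu : Submodule.span F (Set.range u) = colSpace M := by
    have h1 : Set.range u = (colSpace M).subtype '' (Set.range b) := by
      ext x
      constructor
      · rintro ⟨i, rfl⟩; exact ⟨b (e i), ⟨e i, rfl⟩, rfl⟩
      · rintro ⟨y, ⟨i, rfl⟩, rfl⟩; exact ⟨e.symm i, by simp [hu_def]⟩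
    rw [h1, ← Submodule.map_span, b.span_eq, Submodule.map_subtype_top]
  have hcolmem : ∀ j, (fun b' => M b' j) ∈ colSpace M := fun j => Submodule.subset_span ⟨j, rfl⟩
  set col : Fin n → colSpace M := fun j => ⟨fun b' => M b' j, hcolmem j⟩ with hcol_def
  set v : Fin m → (Fin n → F) := fun i => fun j => b.repr (col j) (e i) with hv_def
  have hM : M = ∑ i : Fin m, Matrix.vecMulVec (u i) (v i) := by
    funext a j
    rw [Matrix.sum_apply]
    have h2 := b.sum_repr (col j)
    have h3 : ((∑ i', b.repr (col j) i' • b i' : colSpace M) : Fin n → F) = (col j : Fin n → F) := by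
      rw [h2]
    rw [Submodule.coe_sum] at h3
    have h4 := congrFun h3 a
    rw [Finset.sum_apply] at h4
    simp only [Submodule.coe_smul, Pi.smul_apply, smul_eq_mul] at h4
    have h5 : M a j = ∑ i', b.repr (col j) i' * (b i' : Fin n → F) a := h4.symm
    rw [h5, ← Equiv.sum_comp e (fun i' => b.repr (col j) i' * (b i' : Fin n → F) a)]
    refine Finset.sum_congr rfl fun i _ => ?_
    simp [hu_def, hv_def, Matrix.vecMulVec_apply, mul_comm]
  have hrowle : rowSpace M ≤ Submodule.span F (Set.range v) := by
    refine Submodule.span_le.2 ?_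
    rintro x ⟨a, rfl⟩
    show M a ∈ _
    have : M a = ∑ i : Fin m, u i a • v i := by
      funext j
      rw [hM, Matrix.sum_apply]  -- careful
      simp [Matrix.vecMulVec_apply, Finset.sum_apply]
    rw [this]
    exact Submodule.sum_mem _ fun i _ =>
      Submodule.smul_mem _ _ (Submodule.subset_span ⟨i, rfl⟩)
  have hv : LinearIndependent F v := by
    rw [linearIndependent_iff_card_le_finrank_span]
    have h6 : finrank F (rowSpace M) ≤ finrank F (Submodule.span F (Set.range v)) :=
      Submodule.finrank_mono hrowle
    rw [finrank_rowSpace_eq_rank, h] at h6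
    simpa [Set.finrank] using h6
  have hspanv : Submodule.span F (Set.range v) = rowSpace M := by
    refine (Submodule.eq_of_le_of_finrank_le hrowle ?_).symm
    rw [finrank_span_eq_card hv, finrank_rowSpace_eq_rank, h]
    simp
  obtain ⟨S, -, hScard⟩ := Finset.exists_subset_card_eq (s := (Finset.univ : Finset (Fin m))) (n := s)
    (by simp [hm])
  refine ⟨∑ i ∈ S, Matrix.vecMulVec (u i) (v i), ∑ i ∈ Sᶜ, Matrix.vecMulVec (u i) (v i),
    ?_, ?_, ?_, ?_, ?_, ?_, ?_⟩
  · rw [hM, ← Finset.sum_add_sum_compl S]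
  · exact (outer_props hu hv S).2.2.trans hScard
  · rw [(outer_props hu hv Sᶜ).2.2, Finset.card_compl, hScard]
    simp [hm]
  · rw [(outer_props hu hv S).1, (outer_props hu hv Sᶜ).1]
    exact disjoint_iff.1 (hv.disjoint_span_image (Finset.disjoint_coe.2 disjoint_compl_right))
  · rw [(outer_props hu hv S).2.1, (outer_props hu hv Sᶜ).2.1]
    exact disjoint_iff.1 (hu.disjoint_span_image (Finset.disjoint_coe.2 disjoint_compl_right))
  · rw [(outer_props hu hv S).1, (outer_props hu hv Sᶜ).1, ← Submodule.span_union,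
      ← Set.image_union, ← Finset.coe_union, Finset.union_compl, Finset.coe_univ,
      Set.image_univ, hspanv]
  · rw [(outer_props hu hv S).2.1, (outer_props hu hv Sᶜ).2.1, ← Submodule.span_union,
      ← Set.image_union, ← Finset.coe_union, Finset.union_compl, Finset.coe_univ,
      Set.image_univ, hspanu]

lemma inf_bot_of_le_right {V : Type*} [AddCommGroup V] [Module F V]
    {P R R' : Submodule F V} (h : R ≤ R') (h' : P ⊓ R' = ⊥) : P ⊓ R = ⊥ :=
  le_bot_iff.1 (h' ▸ inf_le_inf_left P h)

lemma finrank_span_range_le {V : Type*} [AddCommGroup V] [Module F V]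
    {ι : Type*} [Fintype ι] (f : ι → V) :
    finrank F (Submodule.span F (Set.range f)) ≤ Fintype.card ι := by
  classical
  exact (finrank_span_le_card _).trans
    (by rw [Set.toFinset_card]; exact Fintype.card_range_le f)

lemma finrank_stdSpan_le (d : ℕ) : finrank F (stdSpan F n d) ≤ d := by
  classical
  have hset : {v : Fin n → F | ∃ a : Fin n, (a : ℕ) < d ∧ v = Pi.single a 1}
      = Set.range (fun a : {a : Fin n // (a : ℕ) < d} => Pi.single a.1 (1 : F)) := by
    ext x
    constructor
    · rintro ⟨a, ha, rfl⟩; exact ⟨⟨a, ha⟩, rfl⟩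
    · rintro ⟨a, rfl⟩; exact ⟨a.1, a.2, rfl⟩
  rw [stdSpan, hset]
  refine (finrank_span_range_le _).trans ?_
  have : Fintype.card {a : Fin n // (a : ℕ) < d} ≤ Fintype.card (Fin d) :=
    Fintype.card_le_of_injective (fun a => ⟨a.1.1, a.2⟩)
      (fun x y h => by
        apply Subtype.ext
        apply Fin.ext
        have := congrArg Fin.val h
        simpa using this)
  simpa using this

lemma finrank_sup_le {V : Type*} [AddCommGroup V] [Module F V] [FiniteDimensional F V]
    (P Q : Submodule F V) : finrank F ((P ⊔ Q : Submodule F V)) ≤ finrank F P + finrank F Q := by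
  have := Submodule.finrank_sup_add_finrank_inf_eq P Q
  omega



/-- The graph of Statement 17, reindexed by `j = i + 1` (so the original range
`−1 ≤ i ≤ r−2` becomes `0 ≤ j ≤ r−1`, and `2^{r−i} = 2^{r+1−j}`,
`2^{r−i−1} = 2^{r−j}`, `2^{r−i−2} = 2^{r−j−1}`). With
`R = C` the span of the first `2^{r+1} − 2^{r+1−j}` standard basis vectors: vertices
are the matrices `M ∈ F_q^{n×n}` with `rank M = 2^{r−j}`, `rowspan(M) ∩ R = 0` and
`colspan(M) ∩ C = 0`; `M ∼ M'` iff `M ≠ M'` and there are `L₁, L₂, L₃`, each of rank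
`2^{r−j−1}`, with `M = L₁+L₂`, `M' = L₁+L₃`, `rank(L₁+L₂+L₃) = 3·2^{r−j−1}`, and the
row and column spans of `L₁+L₂+L₃` meeting `R` resp. `C` trivially. -/
def linkG2 (b r n j : ℕ) :
    SimpleGraph {M : Matrix (Fin n) (Fin n) (GaloisField 2 b) //
      M.rank = 2 ^ (r - j) ∧
      rowSpace M ⊓ stdSpan (GaloisField 2 b) n (2 ^ (r + 1) - 2 ^ (r + 1 - j)) = ⊥ ∧
      colSpace M ⊓ stdSpan (GaloisField 2 b) n (2 ^ (r + 1) - 2 ^ (r + 1 - j)) = ⊥} where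
  Adj M M' := M ≠ M' ∧
    ∃ L₁ L₂ L₃ : Matrix (Fin n) (Fin n) (GaloisField 2 b),
      L₁.rank = 2 ^ (r - j - 1) ∧ L₂.rank = 2 ^ (r - j - 1) ∧ L₃.rank = 2 ^ (r - j - 1) ∧
      M.val = L₁ + L₂ ∧ M'.val = L₁ + L₃ ∧
      (L₁ + L₂ + L₃).rank = 3 * 2 ^ (r - j - 1) ∧
      rowSpace (L₁ + L₂ + L₃) ⊓
        stdSpan (GaloisField 2 b) n (2 ^ (r + 1) - 2 ^ (r + 1 - j)) = ⊥ ∧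
      colSpace (L₁ + L₂ + L₃) ⊓
        stdSpan (GaloisField 2 b) n (2 ^ (r + 1) - 2 ^ (r + 1 - j)) = ⊥
  symm := by
    refine ⟨?_⟩
    rintro M M' ⟨h1, L₁, L₂, L₃, hL1, hL2, hL3, hM, hM', hs, hrow, hcol⟩
    refine ⟨Ne.symm h1, L₁, L₃, L₂, hL1, hL3, hL2, hM', hM, ?_, ?_, ?_⟩
    · rwa [add_right_comm]
    · rwa [add_right_comm]
    · rwa [add_right_comm]
  loopless := ⟨fun M h => h.1 rfl⟩

abbrev LV (b r n j : ℕ) : Type _ :=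
  {M : Matrix (Fin n) (Fin n) (GaloisField 2 b) //
    M.rank = 2 ^ (r - j) ∧
    rowSpace M ⊓ stdSpan (GaloisField 2 b) n (2 ^ (r + 1) - 2 ^ (r + 1 - j)) = ⊥ ∧
    colSpace M ⊓ stdSpan (GaloisField 2 b) n (2 ^ (r + 1) - 2 ^ (r + 1 - j)) = ⊥}

lemma linkG2_gp_reachable (b r n j : ℕ) (hj : j + 1 ≤ r) (X Y : LV b r n j)
    (hrowXY : rowSpace Y.val ⊓ (rowSpace X.val ⊔
      stdSpan (GaloisField 2 b) n (2 ^ (r + 1) - 2 ^ (r + 1 - j))) = ⊥)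
    (hcolXY : colSpace Y.val ⊓ (colSpace X.val ⊔
      stdSpan (GaloisField 2 b) n (2 ^ (r + 1) - 2 ^ (r + 1 - j))) = ⊥) :
    (linkG2 b r n j).Reachable X Y := by
  by_cases hXY : X = Y
  · subst hXY; exact SimpleGraph.Reachable.refl X
  set F := GaloisField 2 b with hF
  set R := stdSpan F n (2 ^ (r + 1) - 2 ^ (r + 1 - j)) with hR
  set k := 2 ^ (r - j - 1) with hk
  have hk1 : 0 < k := Nat.pow_pos (by norm_num)
  have h2k : 2 ^ (r - j) = k + k := by
    have h1 : 2 ^ (r - j) = 2 ^ ((r - j - 1) + 1) := by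
      congr 1
      omega
    rw [h1, pow_succ]
    omega
  obtain ⟨hXrank, hXrow, hXcol⟩ := X.2
  obtain ⟨hYrank, hYrow, hYcol⟩ := Y.2
  obtain ⟨A, B, hXAB, hArank, hBrank, hrAB, hcAB, hrABsup, hcABsup⟩ :=
    exists_split X.val k k (by rw [hXrank, h2k])
  obtain ⟨C₁, C₂, hYC, hC1rank, hC2rank, hrC, hcC, hrCsup, hcCsup⟩ :=
    exists_split Y.val k k (by rw [hYrank, h2k])
  have hrA_le : rowSpace A ≤ rowSpace X.val := hrABsup ▸ le_sup_left
  have hrB_le : rowSpace B ≤ rowSpace X.val := hrABsup ▸ le_sup_right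
  have hcA_le : colSpace A ≤ colSpace X.val := hcABsup ▸ le_sup_left
  have hcB_le : colSpace B ≤ colSpace X.val := hcABsup ▸ le_sup_right
  have hrC1_le : rowSpace C₁ ≤ rowSpace Y.val := hrCsup ▸ le_sup_left
  have hrC2_le : rowSpace C₂ ≤ rowSpace Y.val := hrCsup ▸ le_sup_right
  have hcC1_le : colSpace C₁ ≤ colSpace Y.val := hcCsup ▸ le_sup_left
  have hcC2_le : colSpace C₂ ≤ colSpace Y.val := hcCsup ▸ le_sup_right
  -- derived disjointness facts, rows
  have D1r : rowSpace C₁ ⊓ (rowSpace X.val ⊔ R) = ⊥ := inf_bot_of_le hrC1_le hrowXY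
  have D1r' : rowSpace C₂ ⊓ (rowSpace X.val ⊔ R) = ⊥ := inf_bot_of_le hrC2_le hrowXY
  have D2r : rowSpace X.val ⊓ rowSpace C₁ = ⊥ := by
    rw [inf_comm]; exact inf_bot_of_le_right le_sup_left D1r
  have D2r' : rowSpace X.val ⊓ rowSpace C₂ = ⊥ := by
    rw [inf_comm]; exact inf_bot_of_le_right le_sup_left D1r'
  -- cols
  have D1c : colSpace C₁ ⊓ (colSpace X.val ⊔ R) = ⊥ := inf_bot_of_le hcC1_le hcolXY
  have D1c' : colSpace C₂ ⊓ (colSpace X.val ⊔ R) = ⊥ := inf_bot_of_le hcC2_le hcolXY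
  have D2c : colSpace X.val ⊓ colSpace C₁ = ⊥ := by
    rw [inf_comm]; exact inf_bot_of_le_right le_sup_left D1c
  have D2c' : colSpace X.val ⊓ colSpace C₂ = ⊥ := by
    rw [inf_comm]; exact inf_bot_of_le_right le_sup_left D1c'
  -- the intermediate vertex Z = A + C₁
  have hrAC : rowSpace A ⊓ rowSpace C₁ = ⊥ := inf_bot_of_le hrA_le D2r
  have hcAC : colSpace A ⊓ colSpace C₁ = ⊥ := inf_bot_of_le hcA_le D2c
  obtain ⟨hZrank, hZrow, hZcol⟩ := rank_add_of_disjoint hrAC hcAC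
  have hZrowR : rowSpace (A + C₁) ⊓ R = ⊥ := by
    rw [hZrow]
    exact sup_inf_bot (inf_bot_of_le hrA_le hXrow)
      (inf_bot_of_le_right (sup_le_sup_right hrA_le R) D1r)
  have hZcolR : colSpace (A + C₁) ⊓ R = ⊥ := by
    rw [hZcol]
    exact sup_inf_bot (inf_bot_of_le hcA_le hXcol)
      (inf_bot_of_le_right (sup_le_sup_right hcA_le R) D1c)
  have hZmem : (A + C₁).rank = 2 ^ (r - j) ∧
      rowSpace (A + C₁) ⊓ R = ⊥ ∧ colSpace (A + C₁) ⊓ R = ⊥ :=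
    ⟨by rw [hZrank, hArank, hC1rank, h2k], hZrowR, hZcolR⟩
  let Z : LV b r n j := ⟨A + C₁, hZmem⟩
  -- distinctness
  have hBneC1 : B ≠ C₁ := by
    intro hEq
    have hd : rowSpace B ⊓ rowSpace C₁ = ⊥ := inf_bot_of_le hrB_le D2r
    rw [hEq, inf_idem] at hd
    have : C₁.rank = 0 := by rw [← finrank_rowSpace_eq_rank, hd, finrank_bot]
    omega
  have hAneC2 : A ≠ C₂ := by
    intro hEq
    have hd : rowSpace A ⊓ rowSpace C₂ = ⊥ := inf_bot_of_le hrA_le D2r'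
    rw [hEq, inf_idem] at hd
    have : C₂.rank = 0 := by rw [← finrank_rowSpace_eq_rank, hd, finrank_bot]
    omega
  have hXneZ : X ≠ Z := by
    intro hEq
    apply hBneC1
    have hval : X.val = A + C₁ := congrArg Subtype.val hEq
    rw [hXAB] at hval
    exact add_left_cancel hval
  have hZneY : Z ≠ Y := by
    intro hEq
    apply hAneC2
    have hval : A + C₁ = Y.val := congrArg Subtype.val hEq
    rw [hYC, add_comm A C₁] at hval
    exact add_left_cancel hval
  -- edge 1 : X ~ Z
  obtain ⟨hrk1, hro1, hco1⟩ := rank_add_of_disjoint D2r D2c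
  have e1 : (linkG2 b r n j).Adj X Z := by
    refine ⟨hXneZ, A, B, C₁, hArank, hBrank, hC1rank, hXAB, rfl, ?_, ?_, ?_⟩
    · rw [← hXAB, hrk1, hXrank, hC1rank, h2k]; omega
    · rw [← hXAB, hro1]; exact sup_inf_bot hXrow D1r
    · rw [← hXAB, hco1]; exact sup_inf_bot hXcol D1c
  -- edge 2 : Z ~ Y
  have hYrA : (rowSpace C₁ ⊔ rowSpace C₂) ⊓ rowSpace A = ⊥ := by
    rw [hrCsup]
    exact inf_bot_of_le_right (hrA_le.trans le_sup_left) hrowXY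
  have hYcA : (colSpace C₁ ⊔ colSpace C₂) ⊓ colSpace A = ⊥ := by
    rw [hcCsup]
    exact inf_bot_of_le_right (hcA_le.trans le_sup_left) hcolXY
  have hZC2r : rowSpace (A + C₁) ⊓ rowSpace C₂ = ⊥ := by
    rw [hZrow, inf_comm]
    exact disj_helper hrC hYrA
  have hZC2c : colSpace (A + C₁) ⊓ colSpace C₂ = ⊥ := by
    rw [hZcol, inf_comm]
    exact disj_helper hcC hYcA
  obtain ⟨hrk2, hro2, hco2⟩ := rank_add_of_disjoint hZC2r hZC2c
  have hterm : C₁ + A + C₂ = A + C₁ + C₂ := by rw [add_comm C₁ A]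
  have hC2ZRr : rowSpace C₂ ⊓ (rowSpace (A + C₁) ⊔ R) = ⊥ := by
    rw [hZrow, sup_right_comm]
    refine disj_helper hrC ?_
    rw [hrCsup]
    exact inf_bot_of_le_right (sup_le_sup_right hrA_le R) hrowXY
  have hC2ZRc : colSpace C₂ ⊓ (colSpace (A + C₁) ⊔ R) = ⊥ := by
    rw [hZcol, sup_right_comm]
    refine disj_helper hcC ?_
    rw [hcCsup]
    exact inf_bot_of_le_right (sup_le_sup_right hcA_le R) hcolXY
  have e2 : (linkG2 b r n j).Adj Z Y := by
    refine ⟨hZneY, C₁, A, C₂, hC1rank, hArank, hC2rank, add_comm A C₁, hYC, ?_, ?_, ?_⟩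
    · rw [hterm, hrk2, hZrank, hArank, hC1rank, hC2rank]; omega
    · rw [hterm, hro2]
      exact sup_inf_bot hZrowR hC2ZRr
    · rw [hterm, hco2]
      exact sup_inf_bot hZcolR hC2ZRc
  exact (e1.reachable).trans (e2.reachable)

/-- For `q = 2^b` with `b ≥ 2`, `r ≥ 1`, `n ≥ 2^{r+1}` and
`−1 ≤ i ≤ r−2` (written with `j = i + 1`, so `0 ≤ j ≤ r−1`), the graph
`linkG2 b r n j` is connected and non-bipartite (not 2-colorable). -/
theorem stmt17 (r b n j : ℕ) (hr : 1 ≤ r) (hb : 2 ≤ b) (hn : 2 ^ (r + 1) ≤ n)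
    (hj : j + 1 ≤ r) :
    (linkG2 b r n j).Connected ∧ ¬ (linkG2 b r n j).Colorable 2 := by
  classical
  set d := 2 ^ (r + 1) - 2 ^ (r + 1 - j) with hd
  set R := stdSpan (GaloisField 2 b) n d with hR
  set k := 2 ^ (r - j - 1) with hk
  have hk1 : 0 < k := Nat.pow_pos (by norm_num)
  have h2k : 2 ^ (r - j) = k + k := by
    have h1 : 2 ^ (r - j) = 2 ^ ((r - j - 1) + 1) := by congr 1; omega
    rw [h1, pow_succ]; omega
  have h4k : 2 ^ (r + 1 - j) = 4 * k := by
    have h1 : 2 ^ (r + 1 - j) = 2 ^ ((r - j - 1) + 2) := by congr 1; omega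
    rw [h1, pow_add]; omega
  have hdn : d + 4 * k ≤ n := by
    have h1 : 2 ^ (r + 1 - j) ≤ 2 ^ (r + 1) := Nat.pow_le_pow_right (by norm_num) (by omega)
    omega
  have hRd : finrank (GaloisField 2 b) R ≤ d := finrank_stdSpan_le d
  -- ===== triangle =====
  obtain ⟨v3, hv3li, hv3R, -⟩ := exists_li_avoid R ⊥ (3 * k) (by omega) (by simp; omega)
  obtain ⟨u3, hu3li, hu3R, -⟩ := exists_li_avoid R ⊥ (3 * k) (by omega) (by simp; omega)
  set e3 : Fin 3 × Fin k ≃ Fin (3 * k) := finProdFinEquiv with he3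
  set u : Fin 3 × Fin k → (Fin n → (GaloisField 2 b)) := u3 ∘ e3 with hu_def
  set v : Fin 3 × Fin k → (Fin n → (GaloisField 2 b)) := v3 ∘ e3 with hv_def
  have hu : LinearIndependent (GaloisField 2 b) u := hu3li.comp e3 e3.injective
  have hv : LinearIndependent (GaloisField 2 b) v := hv3li.comp e3 e3.injective
  set S : Fin 3 → Finset (Fin 3 × Fin k) := fun i => {i} ×ˢ Finset.univ with hS
  have hcard : ∀ i, (S i).card = k := by
    intro i; simp [hS]
  set L : Fin 3 → Matrix (Fin n) (Fin n) (GaloisField 2 b) :=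
    fun i => ∑ p ∈ S i, Matrix.vecMulVec (u p) (v p) with hL
  have props : ∀ i, rowSpace (L i) = Submodule.span (GaloisField 2 b) (v '' ↑(S i)) ∧
      colSpace (L i) = Submodule.span (GaloisField 2 b) (u '' ↑(S i)) ∧ (L i).rank = (S i).card :=
    fun i => outer_props hu hv (S i)
  have hrankL : ∀ i, (L i).rank = k := fun i => (props i).2.2.trans (hcard i)
  have sdis : ∀ i i' : Fin 3, i ≠ i' → Disjoint (↑(S i) : Set (Fin 3 × Fin k)) ↑(S i') := by
    intro i i' h
    rw [Set.disjoint_left]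
    rintro ⟨p1, p2⟩ hp hp'
    simp [hS, Finset.mem_product] at hp hp'
    exact h (hp.trans hp'.symm)
  have rdis : ∀ i i', i ≠ i' → rowSpace (L i) ⊓ rowSpace (L i') = ⊥ := by
    intro i i' h
    rw [(props i).1, (props i').1]
    exact disjoint_iff.1 (hv.disjoint_span_image (sdis i i' h))
  have cdis : ∀ i i', i ≠ i' → colSpace (L i) ⊓ colSpace (L i') = ⊥ := by
    intro i i' h
    rw [(props i).2.1, (props i').2.1]
    exact disjoint_iff.1 (hu.disjoint_span_image (sdis i i' h))
  have himv : ∀ i, Submodule.span (GaloisField 2 b) (v '' ↑(S i)) ≤ Submodule.span (GaloisField 2 b) (Set.range v3) := by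
    intro i
    refine Submodule.span_mono ?_
    rintro x ⟨p, -, rfl⟩
    exact ⟨e3 p, rfl⟩
  have himu : ∀ i, Submodule.span (GaloisField 2 b) (u '' ↑(S i)) ≤ Submodule.span (GaloisField 2 b) (Set.range u3) := by
    intro i
    refine Submodule.span_mono ?_
    rintro x ⟨p, -, rfl⟩
    exact ⟨e3 p, rfl⟩
  -- pairwise sums
  have mkmem : ∀ i i' : Fin 3, i ≠ i' → (L i + L i').rank = 2 ^ (r - j) ∧
      rowSpace (L i + L i') ⊓ R = ⊥ ∧ colSpace (L i + L i') ⊓ R = ⊥ := by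
    intro i i' h
    obtain ⟨hr1, hr2, hr3⟩ := rank_add_of_disjoint (rdis i i' h) (cdis i i' h)
    refine ⟨by rw [hr1, hrankL, hrankL, h2k], ?_, ?_⟩
    · rw [hr2, (props i).1, (props i').1]
      exact inf_bot_of_le (sup_le (himv i) (himv i')) hv3R
    · rw [hr3, (props i).2.1, (props i').2.1]
      exact inf_bot_of_le (sup_le (himu i) (himu i')) hu3R
  set V01 : LV b r n j := ⟨L 0 + L 1, mkmem 0 1 (by decide)⟩ with hV01
  set V02 : LV b r n j := ⟨L 0 + L 2, mkmem 0 2 (by decide)⟩ with hV02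
  set V12 : LV b r n j := ⟨L 1 + L 2, mkmem 1 2 (by decide)⟩ with hV12
  have LneL : ∀ i i' : Fin 3, i ≠ i' → L i ≠ L i' := by
    intro i i' h hEq
    have hd' := rdis i i' h
    rw [hEq, inf_idem] at hd'
    have : (L i').rank = 0 := by rw [← finrank_rowSpace_eq_rank, hd', finrank_bot]
    have := hrankL i'
    omega
  -- the three-fold sum
  have h012r : rowSpace (L 0 + L 1) ⊓ rowSpace (L 2) = ⊥ := by
    rw [(rank_add_of_disjoint (rdis 0 1 (by decide)) (cdis 0 1 (by decide))).2.1,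
      (props 0).1, (props 1).1, (props 2).1, ← Submodule.span_union, ← Set.image_union]
    exact disjoint_iff.1 (hv.disjoint_span_image
      (Set.disjoint_union_left.2 ⟨sdis 0 2 (by decide), sdis 1 2 (by decide)⟩))
  have h012c : colSpace (L 0 + L 1) ⊓ colSpace (L 2) = ⊥ := by
    rw [(rank_add_of_disjoint (rdis 0 1 (by decide)) (cdis 0 1 (by decide))).2.2,
      (props 0).2.1, (props 1).2.1, (props 2).2.1, ← Submodule.span_union, ← Set.image_union]
    exact disjoint_iff.1 (hu.disjoint_span_image
      (Set.disjoint_union_left.2 ⟨sdis 0 2 (by decide), sdis 1 2 (by decide)⟩))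
  obtain ⟨r012, ro012, co012⟩ := rank_add_of_disjoint h012r h012c
  have hrank012 : (L 0 + L 1 + L 2).rank = 3 * k := by
    rw [r012, (rank_add_of_disjoint (rdis 0 1 (by decide)) (cdis 0 1 (by decide))).1,
      hrankL, hrankL, hrankL]
    omega
  have hrow012 : rowSpace (L 0 + L 1 + L 2) ⊓ R = ⊥ := by
    rw [ro012, (rank_add_of_disjoint (rdis 0 1 (by decide)) (cdis 0 1 (by decide))).2.1,
      (props 0).1, (props 1).1, (props 2).1]
    exact inf_bot_of_le (sup_le (sup_le (himv 0) (himv 1)) (himv 2)) hv3R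
  have hcol012 : colSpace (L 0 + L 1 + L 2) ⊓ R = ⊥ := by
    rw [co012, (rank_add_of_disjoint (rdis 0 1 (by decide)) (cdis 0 1 (by decide))).2.2,
      (props 0).2.1, (props 1).2.1, (props 2).2.1]
    exact inf_bot_of_le (sup_le (sup_le (himu 0) (himu 1)) (himu 2)) hu3R
  -- distinctness of triangle vertices
  have hne0102 : V01 ≠ V02 := by
    intro h
    exact LneL 1 2 (by decide) (add_left_cancel (congrArg Subtype.val h))
  have hne0112 : V01 ≠ V12 := by
    intro h
    have hval : L 0 + L 1 = L 1 + L 2 := congrArg Subtype.val h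
    rw [add_comm (L 1) (L 2)] at hval
    exact LneL 0 2 (by decide) (add_right_cancel hval)
  have hne0212 : V02 ≠ V12 := by
    intro h
    have hval : L 0 + L 2 = L 1 + L 2 := congrArg Subtype.val h
    exact LneL 0 1 (by decide) (add_right_cancel hval)
  -- triangle edges
  have e0102 : (linkG2 b r n j).Adj V01 V02 :=
    ⟨hne0102, L 0, L 1, L 2, hrankL 0, hrankL 1, hrankL 2, rfl, rfl,
      hrank012, hrow012, hcol012⟩
  have hperm1 : L 1 + L 0 + L 2 = L 0 + L 1 + L 2 := by abel
  have e0112 : (linkG2 b r n j).Adj V01 V12 :=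
    ⟨hne0112, L 1, L 0, L 2, hrankL 1, hrankL 0, hrankL 2, add_comm (L 0) (L 1), rfl,
      by rw [hperm1]; exact hrank012, by rw [hperm1]; exact hrow012,
      by rw [hperm1]; exact hcol012⟩
  have hperm2 : L 2 + L 0 + L 1 = L 0 + L 1 + L 2 := by abel
  have e0212 : (linkG2 b r n j).Adj V02 V12 :=
    ⟨hne0212, L 2, L 0, L 1, hrankL 2, hrankL 0, hrankL 1, add_comm (L 0) (L 2),
      add_comm (L 1) (L 2),
      by rw [hperm2]; exact hrank012, by rw [hperm2]; exact hrow012,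
      by rw [hperm2]; exact hcol012⟩
  -- ===== hub-based preconnectedness =====
  have precon : (linkG2 b r n j).Preconnected := by
    intro X Y
    obtain ⟨hXrank, hXrow, hXcol⟩ := X.2
    obtain ⟨hYrank, hYrow, hYcol⟩ := Y.2
    have hfrX : finrank (GaloisField 2 b) (rowSpace X.val) = k + k := by
      rw [finrank_rowSpace_eq_rank, hXrank, h2k]
    have hfrY : finrank (GaloisField 2 b) (rowSpace Y.val) = k + k := by
      rw [finrank_rowSpace_eq_rank, hYrank, h2k]
    have hfcX : finrank (GaloisField 2 b) (colSpace X.val) = k + k := by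
      rw [finrank_colSpace_eq_rank, hXrank, h2k]
    have hfcY : finrank (GaloisField 2 b) (colSpace Y.val) = k + k := by
      rw [finrank_colSpace_eq_rank, hYrank, h2k]
    have hbrX : finrank (GaloisField 2 b) ((rowSpace X.val ⊔ R : Submodule (GaloisField 2 b) (Fin n → (GaloisField 2 b)))) + 2 * k ≤ n := by
      have := finrank_sup_le (rowSpace X.val) R
      omega
    have hbrY : finrank (GaloisField 2 b) ((rowSpace Y.val ⊔ R : Submodule (GaloisField 2 b) (Fin n → (GaloisField 2 b)))) + 2 * k ≤ n := by
      have := finrank_sup_le (rowSpace Y.val) R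
      omega
    have hbcX : finrank (GaloisField 2 b) ((colSpace X.val ⊔ R : Submodule (GaloisField 2 b) (Fin n → (GaloisField 2 b)))) + 2 * k ≤ n := by
      have := finrank_sup_le (colSpace X.val) R
      omega
    have hbcY : finrank (GaloisField 2 b) ((colSpace Y.val ⊔ R : Submodule (GaloisField 2 b) (Fin n → (GaloisField 2 b)))) + 2 * k ≤ n := by
      have := finrank_sup_le (colSpace Y.val) R
      omega
    obtain ⟨v2, hv2li, hv2X, hv2Y⟩ :=
      exists_li_avoid (rowSpace X.val ⊔ R) (rowSpace Y.val ⊔ R) (2 * k) hbrX hbrY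
    obtain ⟨u2, hu2li, hu2X, hu2Y⟩ :=
      exists_li_avoid (colSpace X.val ⊔ R) (colSpace Y.val ⊔ R) (2 * k) hbcX hbcY
    set Zmat : Matrix (Fin n) (Fin n) (GaloisField 2 b) :=
      ∑ p ∈ Finset.univ, Matrix.vecMulVec (u2 p) (v2 p) with hZmat
    obtain ⟨hZro, hZco, hZrk⟩ := outer_props hu2li hv2li Finset.univ
    rw [Finset.coe_univ, Set.image_univ] at hZro hZco
    have hZrowR : rowSpace Zmat ⊓ R = ⊥ := by
      rw [hZro]
      exact inf_bot_of_le_right le_sup_right hv2X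
    have hZcolR : colSpace Zmat ⊓ R = ⊥ := by
      rw [hZco]
      exact inf_bot_of_le_right le_sup_right hu2X
    have hZrank : Zmat.rank = 2 ^ (r - j) := by
      rw [hZrk, h2k]
      simp
      omega
    set Zv : LV b r n j := ⟨Zmat, hZrank, hZrowR, hZcolR⟩ with hZv
    have reach1 : (linkG2 b r n j).Reachable X Zv := by
      refine linkG2_gp_reachable b r n j hj X Zv ?_ ?_
      · show rowSpace Zmat ⊓ _ = ⊥
        rw [hZro]; exact hv2X
      · show colSpace Zmat ⊓ _ = ⊥
        rw [hZco]; exact hu2X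
    have reach2 : (linkG2 b r n j).Reachable Y Zv := by
      refine linkG2_gp_reachable b r n j hj Y Zv ?_ ?_
      · show rowSpace Zmat ⊓ _ = ⊥
        rw [hZro]; exact hv2Y
      · show colSpace Zmat ⊓ _ = ⊥
        rw [hZco]; exact hu2Y
    exact reach1.trans reach2.symm
  constructor
  · rw [SimpleGraph.connected_iff]
    exact ⟨precon, ⟨V01⟩⟩
  · rintro ⟨C⟩
    have h1 : C V01 ≠ C V02 := C.valid e0102
    have h2 : C V01 ≠ C V12 := C.valid e0112
    have h3 : C V02 ≠ C V12 := C.valid e0212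
    have w1 : (C V01).val < 2 := (C V01).isLt
    have w2 : (C V02).val < 2 := (C V02).isLt
    have w3 : (C V12).val < 2 := (C V12).isLt
    have d1 : (C V01).val ≠ (C V02).val := fun h => h1 (Fin.ext h)
    have d2 : (C V01).val ≠ (C V12).val := fun h => h2 (Fin.ext h)
    have d3 : (C V02).val ≠ (C V12).val := fun h => h3 (Fin.ext h)
    omega
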